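/- Let A, B ∈ ℂ^{m×n}, p ∈ [1,∞], q ∈ [0,1]. Suppose that for every row index i, ‖A(i,:) − B(i,:)‖_p ≤ (1−q) ‖A(i,:)‖_p, and for every column index j, ‖A(:,j) − B(:,j)‖_p ≤ (1−q) ‖A(:,j)‖_p, where ‖·‖_p is the vector ℓ_p norm. Then ‖A − B‖₂ ≤ (mn)^{C/2} (1−q) ‖A‖₂, where ‖·‖₂ denotes the spectral norm (largest singular value) and C := 1 − 1/p + |1/2 − 1/p|. -/

import Mathlib

open scoped Matrix ENNReal

/-- The spectral norm (largest singular value): the operator norm of the matrix as a map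
between Euclidean spaces. -/
noncomputable def specNorm {m n : ℕ} (M : Matrix (Fin m) (Fin n) ℂ) : ℝ :=
  ‖LinearMap.toContinuousLinearMap (Matrix.toEuclideanLin M)‖

/-- The vector ℓ_p norm. -/
noncomputable def lpnorm (p : ℝ≥0∞) [Fact (1 ≤ p)] {k : ℕ} (x : Fin k → ℂ) : ℝ :=
  ‖(WithLp.equiv p (Fin k → ℂ)).symm x‖

open scoped Matrix.Norms.L2Operator

lemma specNorm_eq_norm {m n : ℕ} (M : Matrix (Fin m) (Fin n) ℂ) : specNorm M = ‖M‖ := rfl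

lemma specNorm_nonneg {m n : ℕ} (M : Matrix (Fin m) (Fin n) ℂ) : 0 ≤ specNorm M :=
  norm_nonneg _

lemma specNorm_zero {m n : ℕ} : specNorm (0 : Matrix (Fin m) (Fin n) ℂ) = 0 := by
  simp [specNorm, map_zero]

lemma lpnorm_two_eq {k : ℕ} (x : Fin k → ℂ) :
    lpnorm 2 x = Real.sqrt (∑ j, ‖x j‖ ^ 2) := by
  rw [lpnorm, EuclideanSpace.norm_eq]
  simp [WithLp.equiv_symm_apply, PiLp.toLp_apply]

lemma lpnorm_eq_sum {p : ℝ≥0∞} [Fact (1 ≤ p)] (hp : p ≠ ∞) {k : ℕ} (x : Fin k → ℂ) :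
    lpnorm p x = (∑ j, ‖x j‖ ^ p.toReal) ^ (1 / p.toReal) := by
  have ht : 1 ≤ p.toReal := by
    rw [← ENNReal.toReal_one]
    exact ENNReal.toReal_mono hp Fact.out
  rw [lpnorm, PiLp.norm_eq_sum (lt_of_lt_of_le one_pos ht)]
  simp [WithLp.equiv_symm_apply, PiLp.toLp_apply]

lemma lpnorm_top_eq {k : ℕ} (x : Fin k → ℂ) :
    lpnorm ⊤ x = ⨆ j, ‖x j‖ := by
  rw [lpnorm, PiLp.norm_eq_ciSup]
  simp [WithLp.equiv_symm_apply, PiLp.toLp_apply]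

lemma one_le_toReal {p : ℝ≥0∞} [Fact (1 ≤ p)] (hp : p ≠ ∞) : 1 ≤ p.toReal := by
  rw [← ENNReal.toReal_one]
  exact ENNReal.toReal_mono hp Fact.out

lemma inv_toReal_eq (p : ℝ≥0∞) : (1 / p).toReal = 1 / p.toReal := by
  rw [one_div, ENNReal.toReal_inv, one_div]

/-- ℓ1 norm is at most `k^{1-1/p}` times the ℓp norm. -/
lemma l1_le_lpnorm (p : ℝ≥0∞) [Fact (1 ≤ p)] {k : ℕ} (x : Fin k → ℂ) :
    ∑ j, ‖x j‖ ≤ (k : ℝ) ^ (1 - (1 / p).toReal) * lpnorm p x := by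
  rcases eq_or_ne p ∞ with hp | hp
  · subst hp
    simp only [one_div, ENNReal.inv_top, ENNReal.toReal_zero, sub_zero, Real.rpow_one]
    rw [lpnorm_top_eq]
    rcases Nat.eq_zero_or_pos k with hk | hk
    · subst hk; simp
    have hbdd : BddAbove (Set.range fun j : Fin k => ‖x j‖) :=
      Set.Finite.bddAbove (Set.finite_range _)
    calc ∑ j, ‖x j‖ ≤ ∑ _j : Fin k, ⨆ i, ‖x i‖ :=
          Finset.sum_le_sum (fun j _ => le_ciSup hbdd j)
      _ = (k : ℝ) * ⨆ i, ‖x i‖ := by simp [Finset.sum_const, nsmul_eq_mul]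
  · have ht : 1 ≤ p.toReal := one_le_toReal hp
    rw [lpnorm_eq_sum hp, inv_toReal_eq]
    have h := Real.inner_le_weight_mul_Lp_of_nonneg Finset.univ ht (fun _ => 1)
      (fun j => ‖x j‖) (fun _ => zero_le_one) (fun j => norm_nonneg _)
    simpa [Finset.card_univ, one_div, Finset.mul_sum] using h

/-- Each entry is at most the ℓ2 norm. -/
lemma entry_le_l2 {k : ℕ} (x : Fin k → ℂ) (j : Fin k) : ‖x j‖ ≤ lpnorm 2 x := by
  rw [lpnorm_two_eq]
  refine (Real.le_sqrt (norm_nonneg _) (Finset.sum_nonneg fun i _ => by positivity)).mpr ?_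
  exact Finset.single_le_sum (f := fun j => ‖x j‖ ^ 2) (fun i _ => by positivity)
    (Finset.mem_univ j)

/-- ℓp norm is at most `k^{max 0 (1/p - 1/2)}` times the ℓ2 norm. -/
lemma lpnorm_le_l2 (p : ℝ≥0∞) [Fact (1 ≤ p)] {k : ℕ} (x : Fin k → ℂ) :
    lpnorm p x ≤ (k : ℝ) ^ (max 0 ((1 / p).toReal - 1 / 2)) * lpnorm 2 x := by
  have hM : 0 ≤ lpnorm 2 x := norm_nonneg _
  rcases eq_or_ne p ∞ with hp | hp
  · subst hp
    simp only [one_div, ENNReal.inv_top, ENNReal.toReal_zero]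
    rw [max_eq_left (by norm_num), Real.rpow_zero, one_mul, lpnorm_top_eq]
    rcases Nat.eq_zero_or_pos k with hk | hk
    · subst hk
      simp [Real.iSup_of_isEmpty, hM]
    haveI : Nonempty (Fin k) := Fin.pos_iff_nonempty.mp hk
    exact ciSup_le (fun j => entry_le_l2 x j)
  · have ht : 1 ≤ p.toReal := one_le_toReal hp
    have htpos : 0 < p.toReal := lt_of_lt_of_le one_pos ht
    set t := p.toReal with hdef
    rw [lpnorm_eq_sum hp, inv_toReal_eq]
    set M := lpnorm 2 x with hMdef
    rcases le_or_gt 2 t with h2t | ht2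
    · have hmax : max 0 (1 / t - 1 / 2) = 0 := by
        rw [max_eq_left]
        have : 1 / t ≤ 1 / 2 := by
          apply one_div_le_one_div_of_le <;> linarith
        linarith
      rw [hmax, Real.rpow_zero, one_mul]
      have hsum : ∑ j, ‖x j‖ ^ t ≤ M ^ t := by
        rcases eq_or_lt_of_le hM with hM0 | hMpos
        · have hx : ∀ j, ‖x j‖ = 0 := fun j =>
            le_antisymm (le_trans (entry_le_l2 x j) (le_of_eq hM0.symm)) (norm_nonneg _)
          rw [← hM0, Real.zero_rpow (by positivity : t ≠ 0)]
          refine le_of_eq (Finset.sum_eq_zero (fun j _ => by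
            rw [hx j, Real.zero_rpow (by positivity : t ≠ 0)]))
        · have key : ∀ j, ‖x j‖ ^ t ≤ ‖x j‖ ^ 2 * M ^ (t - 2) := by
            intro j
            rcases eq_or_lt_of_le (norm_nonneg (x j)) with h0 | h0
            · rw [← h0, Real.zero_rpow (by positivity)]
              positivity
            · have hle : ‖x j‖ ≤ M := entry_le_l2 x j
              calc ‖x j‖ ^ t = ‖x j‖ ^ (2:ℝ) * ‖x j‖ ^ (t - 2) := by
                    rw [← Real.rpow_add h0]; ring_nf
                _ ≤ ‖x j‖ ^ (2:ℝ) * M ^ (t - 2) := by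
                    refine mul_le_mul_of_nonneg_left ?_ (by positivity)
                    exact Real.rpow_le_rpow (le_of_lt h0) hle (by linarith)
                _ = ‖x j‖ ^ 2 * M ^ (t - 2) := by
                    rw [Real.rpow_two]
          calc ∑ j, ‖x j‖ ^ t ≤ ∑ j, ‖x j‖ ^ 2 * M ^ (t - 2) :=
                Finset.sum_le_sum (fun j _ => key j)
            _ = (∑ j, ‖x j‖ ^ 2) * M ^ (t - 2) := by rw [← Finset.sum_mul]
            _ = M ^ (2:ℝ) * M ^ (t - 2) := by
                rw [hMdef, lpnorm_two_eq, Real.rpow_two,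
                  Real.sq_sqrt (by positivity)]
            _ = M ^ t := by rw [← Real.rpow_add hMpos]; ring_nf
      calc (∑ j, ‖x j‖ ^ t) ^ (1 / t) ≤ (M ^ t) ^ (1 / t) := by
            refine Real.rpow_le_rpow ?_ hsum (by positivity)
            exact Finset.sum_nonneg (fun j _ => by positivity)
        _ = M := by
            rw [← Real.rpow_mul hM, mul_one_div, div_self htpos.ne', Real.rpow_one]
    · have hmax : max 0 (1 / t - 1 / 2) = 1 / t - 1 / 2 := by
        rw [max_eq_right]
        have : 1 / 2 ≤ 1 / t := by
          apply one_div_le_one_div_of_le <;> linarith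
        linarith
      rw [hmax]
      have hs : 1 ≤ 2 / t := by
        rw [le_div_iff₀ htpos]; linarith
      have h := Real.inner_le_weight_mul_Lp_of_nonneg Finset.univ hs (fun _ => 1)
        (fun j => ‖x j‖ ^ t) (fun _ => zero_le_one) (fun j => by positivity)
      simp only [one_mul, Finset.sum_const, Finset.card_univ, Fintype.card_fin,
        nsmul_eq_mul, mul_one] at h
      have hpow : ∀ j : Fin k, (‖x j‖ ^ t) ^ (2 / t) = ‖x j‖ ^ 2 := by
        intro j
        have h2 : t * (2 / t) = 2 := by field_simp
        rw [← Real.rpow_mul (norm_nonneg _), h2, Real.rpow_two]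
      simp only [hpow, inv_div] at h
      have hsum2 : (0:ℝ) ≤ ∑ j, ‖x j‖ ^ 2 := Finset.sum_nonneg fun j _ => by positivity
      have hk0 : (0:ℝ) ≤ (k:ℝ) := Nat.cast_nonneg k
      calc (∑ j, ‖x j‖ ^ t) ^ (1 / t)
          ≤ ((k:ℝ) ^ (1 - t / 2) * (∑ j, ‖x j‖ ^ 2) ^ (t / 2)) ^ (1 / t) := by
            refine Real.rpow_le_rpow (Finset.sum_nonneg fun j _ => by positivity) h
              (by positivity)
        _ = (k:ℝ) ^ (1 / t - 1 / 2) * M := by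
            rw [Real.mul_rpow (Real.rpow_nonneg hk0 _) (Real.rpow_nonneg hsum2 _),
              ← Real.rpow_mul hk0, ← Real.rpow_mul hsum2]
            have ht0 : t ≠ 0 := htpos.ne'
            have e2 : t / 2 * (1 / t) = 1 / 2 := by
              rw [div_mul_div_comm, mul_one, mul_comm]
              rw [div_eq_div_iff (by positivity) (by norm_num)]
              ring
            have e1 : (1 - t / 2) * (1 / t) = 1 / t - 1 / 2 := by
              rw [sub_mul, one_mul, e2]
            rw [e1, e2, hMdef, lpnorm_two_eq, Real.sqrt_eq_rpow]

/-- Schur test: the spectral norm is bounded by the geometric mean of the maximal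
row- and column ℓ1 sums. -/
lemma schur_bound {m n : ℕ} (M : Matrix (Fin m) (Fin n) ℂ) {r s : ℝ}
    (hr : 0 ≤ r) (hs : 0 ≤ s)
    (hR : ∀ i, ∑ j, ‖M i j‖ ≤ r) (hS : ∀ j, ∑ i, ‖M i j‖ ≤ s) :
    specNorm M ≤ Real.sqrt (r * s) := by
  rw [specNorm]
  refine ContinuousLinearMap.opNorm_le_bound _ (Real.sqrt_nonneg _) (fun x => ?_)
  set T := LinearMap.toContinuousLinearMap (Matrix.toEuclideanLin M) with hT
  have happ : ∀ i, (T x) i = ∑ j, M i j * x j := by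
    intro i
    rfl
  have key : ‖T x‖ ^ 2 ≤ (r * s) * ‖x‖ ^ 2 := by
    rw [EuclideanSpace.norm_eq, Real.sq_sqrt (by positivity)]
    have step1 : ∀ i, ‖(T x) i‖ ^ 2 ≤ r * ∑ j, ‖M i j‖ * ‖x j‖ ^ 2 := by
      intro i
      have h1 : ‖(T x) i‖ ≤ ∑ j, ‖M i j‖ * ‖x j‖ := by
        rw [happ i]
        refine (norm_sum_le _ _).trans (le_of_eq ?_)
        simp [norm_mul]
      have h2 : ‖(T x) i‖ ^ 2 ≤ (∑ j, ‖M i j‖ * ‖x j‖) ^ 2 := by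
        have := norm_nonneg ((T x) i)
        nlinarith [Finset.sum_nonneg (fun j (_ : j ∈ Finset.univ) =>
          mul_nonneg (norm_nonneg (M i j)) (norm_nonneg (x j)))]
      refine h2.trans ?_
      have hCS : (∑ j, ‖M i j‖ * ‖x j‖) ^ 2 ≤
          (∑ j, ‖M i j‖) * ∑ j, ‖M i j‖ * ‖x j‖ ^ 2 := by
        refine Finset.sum_sq_le_sum_mul_sum_of_sq_eq_mul Finset.univ
          (fun j _ => norm_nonneg _) (fun j _ => by positivity) (fun j _ => by ring)
      refine hCS.trans ?_
      have : (0:ℝ) ≤ ∑ j, ‖M i j‖ * ‖x j‖ ^ 2 := by positivity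
      exact mul_le_mul_of_nonneg_right (hR i) this
    calc ∑ i, ‖(T x) i‖ ^ 2 ≤ ∑ i, r * ∑ j, ‖M i j‖ * ‖x j‖ ^ 2 :=
          Finset.sum_le_sum (fun i _ => step1 i)
      _ = r * ∑ j, (∑ i, ‖M i j‖) * ‖x j‖ ^ 2 := by
          rw [← Finset.mul_sum, Finset.sum_comm]
          congr 1
          refine Finset.sum_congr rfl (fun j _ => ?_)
          rw [Finset.sum_mul]
      _ ≤ r * ∑ j, s * ‖x j‖ ^ 2 := by
          refine mul_le_mul_of_nonneg_left (Finset.sum_le_sum (fun j _ => ?_)) hr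
          exact mul_le_mul_of_nonneg_right (hS j) (by positivity)
      _ = (r * s) * ∑ j, ‖x j‖ ^ 2 := by rw [← Finset.mul_sum]; ring
      _ = (r * s) * ‖x‖ ^ 2 := by
          rw [EuclideanSpace.norm_eq, Real.sq_sqrt (by positivity)]
  calc ‖T x‖ = Real.sqrt (‖T x‖ ^ 2) := (Real.sqrt_sq (norm_nonneg _)).symm
    _ ≤ Real.sqrt ((r * s) * ‖x‖ ^ 2) := Real.sqrt_le_sqrt key
    _ = Real.sqrt (r * s) * ‖x‖ := by
        rw [Real.sqrt_mul (by positivity), Real.sqrt_sq (norm_nonneg _)]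

/-- The ℓ2 norm of a column is at most the spectral norm. -/
lemma col_le_spec {m n : ℕ} (A : Matrix (Fin m) (Fin n) ℂ) (j : Fin n) :
    lpnorm 2 (fun i => A i j) ≤ specNorm A := by
  set T := LinearMap.toContinuousLinearMap (Matrix.toEuclideanLin A) with hT
  have heq : lpnorm 2 (fun i => A i j) = ‖T (EuclideanSpace.single j 1)‖ := by
    rw [lpnorm]
    congr 1
    ext i
    show A i j = ∑ k, A i k * (EuclideanSpace.single j (1:ℂ)) k
    simp [EuclideanSpace.single_apply]
  rw [heq]
  have h := T.le_opNorm (EuclideanSpace.single j 1)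
  exact (by simpa [EuclideanSpace.norm_single] using h : _ ≤ ‖T‖)

/-- The ℓ2 norm of a row is at most the spectral norm. -/
lemma row_le_spec {m n : ℕ} (A : Matrix (Fin m) (Fin n) ℂ) (i : Fin m) :
    lpnorm 2 (fun j => A i j) ≤ specNorm A := by
  have h := col_le_spec Aᴴ i
  have h1 : lpnorm 2 (fun j => A i j) = lpnorm 2 (fun k => Aᴴ k i) := by
    rw [lpnorm_two_eq, lpnorm_two_eq]
    congr 1
    refine Finset.sum_congr rfl (fun k _ => ?_)
    rw [Matrix.conjTranspose_apply, norm_star]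
  have h2 : specNorm Aᴴ = specNorm A := by
    rw [specNorm_eq_norm, specNorm_eq_norm]
    exact Matrix.l2_opNorm_conjTranspose A
  rw [h1, ← h2]
  exact h

/-- if every row and every column of `B` approximates that of `A` to within a
factor `1 - q` in the ℓ_p norm, then `‖A - B‖₂ ≤ (mn)^{C/2} (1-q) ‖A‖₂` where
`C = 1 - 1/p + |1/2 - 1/p|`. -/
theorem stmt7 {m n : ℕ} (A B : Matrix (Fin m) (Fin n) ℂ)
    (p : ℝ≥0∞) [Fact (1 ≤ p)] (q : ℝ) (hq0 : 0 ≤ q) (hq1 : q ≤ 1)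
    (hrow : ∀ i : Fin m,
      lpnorm p (fun j => A i j - B i j) ≤ (1 - q) * lpnorm p (fun j => A i j))
    (hcol : ∀ j : Fin n,
      lpnorm p (fun i => A i j - B i j) ≤ (1 - q) * lpnorm p (fun i => A i j)) :
    specNorm (A - B) ≤
      ((m : ℝ) * n) ^ ((1 - (1 / p).toReal + |1 / 2 - (1 / p).toReal|) / 2)
        * (1 - q) * specNorm A := by
  set t := (1 / p).toReal with htdef
  have ht0 : 0 ≤ t := ENNReal.toReal_nonneg
  have ht1 : t ≤ 1 := by
    rw [htdef, one_div]
    have hinv : p⁻¹ ≤ 1 := ENNReal.inv_le_one.mpr Fact.out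
    calc (p⁻¹).toReal ≤ (1 : ℝ≥0∞).toReal := ENNReal.toReal_mono ENNReal.one_ne_top hinv
      _ = 1 := ENNReal.toReal_one
  set C := 1 - t + |1 / 2 - t| with hCdef
  have habs1 : t - 1 / 2 ≤ |1 / 2 - t| := by
    rw [abs_sub_comm]; exact le_abs_self _
  have hq : (0:ℝ) ≤ 1 - q := by linarith
  have hX : 0 ≤ specNorm A := specNorm_nonneg A
  have hRHS0 : ∀ c : ℝ, 0 ≤ c →
      (0:ℝ) ≤ c * (1 - q) * specNorm A := fun c hc =>
    mul_nonneg (mul_nonneg hc hq) hX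
  rcases Nat.eq_zero_or_pos m with hm | hm
  · subst hm
    have hAB : A - B = 0 := by
      ext i j
      exact i.elim0
    rw [hAB, specNorm_zero]
    exact hRHS0 _ (Real.rpow_nonneg (by positivity) _)
  rcases Nat.eq_zero_or_pos n with hn | hn
  · subst hn
    have hAB : A - B = 0 := by
      ext i j
      exact j.elim0
    rw [hAB, specNorm_zero]
    exact hRHS0 _ (Real.rpow_nonneg (by positivity) _)
  have hm1 : (1:ℝ) ≤ (m:ℝ) := by exact_mod_cast Nat.one_le_cast.mpr hm
  have hn1 : (1:ℝ) ≤ (n:ℝ) := by exact_mod_cast Nat.one_le_cast.mpr hn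
  have hmpos : (0:ℝ) < (m:ℝ) := by linarith
  have hnpos : (0:ℝ) < (n:ℝ) := by linarith
  set e := 1 - t + max 0 (t - 1/2) with hedef
  have heC : e ≤ C := by
    have h1 : max 0 (t - 1/2) ≤ |1 / 2 - t| := max_le (abs_nonneg _) habs1
    rw [hedef, hCdef]
    linarith
  set X := specNorm A with hXdef
  set K := (1 - q) * X with hKdef
  have hK : 0 ≤ K := mul_nonneg hq hX
  have hR : ∀ i, ∑ j, ‖(A - B) i j‖ ≤ (n:ℝ) ^ e * K := by
    intro i
    have h1 := l1_le_lpnorm p (fun j => A i j - B i j)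
    have h2 := hrow i
    have h3 := lpnorm_le_l2 p (fun j => A i j)
    have h4 := row_le_spec A i
    calc ∑ j, ‖(A - B) i j‖ = ∑ j, ‖A i j - B i j‖ := by
          refine Finset.sum_congr rfl (fun j _ => ?_)
          rw [Matrix.sub_apply]
      _ ≤ (n:ℝ) ^ (1 - t) * lpnorm p (fun j => A i j - B i j) := h1
      _ ≤ (n:ℝ) ^ (1 - t) * ((1 - q) * lpnorm p (fun j => A i j)) :=
          mul_le_mul_of_nonneg_left h2 (Real.rpow_nonneg hnpos.le _)
      _ ≤ (n:ℝ) ^ (1 - t) * ((1 - q) *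
            ((n:ℝ) ^ (max 0 (t - 1/2)) * lpnorm 2 (fun j => A i j))) :=
          mul_le_mul_of_nonneg_left (mul_le_mul_of_nonneg_left h3 hq)
            (Real.rpow_nonneg hnpos.le _)
      _ ≤ (n:ℝ) ^ (1 - t) * ((1 - q) * ((n:ℝ) ^ (max 0 (t - 1/2)) * X)) := by
          refine mul_le_mul_of_nonneg_left (mul_le_mul_of_nonneg_left ?_ hq)
            (Real.rpow_nonneg hnpos.le _)
          exact mul_le_mul_of_nonneg_left h4 (Real.rpow_nonneg hnpos.le _)
      _ = (n:ℝ) ^ e * K := by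
          rw [hedef, Real.rpow_add hnpos, hKdef]
          ring
  have hS : ∀ j, ∑ i, ‖(A - B) i j‖ ≤ (m:ℝ) ^ e * K := by
    intro j
    have h1 := l1_le_lpnorm p (fun i => A i j - B i j)
    have h2 := hcol j
    have h3 := lpnorm_le_l2 p (fun i => A i j)
    have h4 := col_le_spec A j
    calc ∑ i, ‖(A - B) i j‖ = ∑ i, ‖A i j - B i j‖ := by
          refine Finset.sum_congr rfl (fun i _ => ?_)
          rw [Matrix.sub_apply]
      _ ≤ (m:ℝ) ^ (1 - t) * lpnorm p (fun i => A i j - B i j) := h1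
      _ ≤ (m:ℝ) ^ (1 - t) * ((1 - q) * lpnorm p (fun i => A i j)) :=
          mul_le_mul_of_nonneg_left h2 (Real.rpow_nonneg hmpos.le _)
      _ ≤ (m:ℝ) ^ (1 - t) * ((1 - q) *
            ((m:ℝ) ^ (max 0 (t - 1/2)) * lpnorm 2 (fun i => A i j))) :=
          mul_le_mul_of_nonneg_left (mul_le_mul_of_nonneg_left h3 hq)
            (Real.rpow_nonneg hmpos.le _)
      _ ≤ (m:ℝ) ^ (1 - t) * ((1 - q) * ((m:ℝ) ^ (max 0 (t - 1/2)) * X)) := by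
          refine mul_le_mul_of_nonneg_left (mul_le_mul_of_nonneg_left ?_ hq)
            (Real.rpow_nonneg hmpos.le _)
          exact mul_le_mul_of_nonneg_left h4 (Real.rpow_nonneg hmpos.le _)
      _ = (m:ℝ) ^ e * K := by
          rw [hedef, Real.rpow_add hmpos, hKdef]
          ring
  have hr0 : (0:ℝ) ≤ (n:ℝ) ^ e * K := mul_nonneg (Real.rpow_nonneg hnpos.le _) hK
  have hs0 : (0:ℝ) ≤ (m:ℝ) ^ e * K := mul_nonneg (Real.rpow_nonneg hmpos.le _) hK
  have main := schur_bound (A - B) hr0 hs0 hR hS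
  refine main.trans ?_
  have hmn0 : (0:ℝ) ≤ (m:ℝ) * n := by positivity
  have hsqrt : Real.sqrt ((n:ℝ) ^ e * K * ((m:ℝ) ^ e * K))
      = ((m:ℝ) * n) ^ (e / 2) * K := by
    rw [show (n:ℝ) ^ e * K * ((m:ℝ) ^ e * K) = ((m:ℝ) ^ e * (n:ℝ) ^ e) * K ^ 2 by ring]
    rw [Real.sqrt_mul (by positivity), Real.sqrt_sq hK]
    congr 1
    rw [← Real.mul_rpow hmpos.le hnpos.le, Real.sqrt_eq_rpow,
      ← Real.rpow_mul hmn0]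
    congr 1
    ring
  rw [hsqrt]
  have hmn1 : (1:ℝ) ≤ (m:ℝ) * n := by nlinarith
  have hle : ((m:ℝ) * n) ^ (e / 2) ≤ ((m:ℝ) * n) ^ (C / 2) :=
    Real.rpow_le_rpow_of_exponent_le hmn1
      (div_le_div_of_nonneg_right heC (by norm_num))
  calc ((m:ℝ) * n) ^ (e / 2) * K ≤ ((m:ℝ) * n) ^ (C / 2) * K :=
        mul_le_mul_of_nonneg_right hle hK
    _ = ((m:ℝ) * n) ^ (C / 2) * (1 - q) * X := by rw [hKdef]; ring
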